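/- Any nonempty alternating word in nonzero powers of U² and L² (i.e., U^{±2n_k} L^{±2m_k} ⋯ with all exponents nonzero) is a nontrivial element of PSL₂(ℤ). -/

import Mathlib

def PSL2Z : Type :=
  Matrix.SpecialLinearGroup (Fin 2) ℤ ⧸ Subgroup.center (Matrix.SpecialLinearGroup (Fin 2) ℤ)

noncomputable instance : Group PSL2Z := QuotientGroup.Quotient.group _

/-- The image of U = [[1,1],[0,1]] in PSL₂(ℤ). -/
noncomputable def uP : PSL2Z :=
  QuotientGroup.mk (⟨!![1, 1; 0, 1], by simp [Matrix.det_fin_two_of]⟩ :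
    Matrix.SpecialLinearGroup (Fin 2) ℤ)

/-- The image of L = [[1,0],[1,1]] in PSL₂(ℤ). -/
noncomputable def lP : PSL2Z :=
  QuotientGroup.mk (⟨!![1, 0; 1, 1], by simp [Matrix.det_fin_two_of]⟩ :
    Matrix.SpecialLinearGroup (Fin 2) ℤ)

namespace PingPongAux

open Matrix

abbrev SL2 := Matrix.SpecialLinearGroup (Fin 2) ℤ

def Umat : SL2 := ⟨!![1, 1; 0, 1], by simp [Matrix.det_fin_two_of]⟩
def Lmat : SL2 := ⟨!![1, 0; 1, 1], by simp [Matrix.det_fin_two_of]⟩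

lemma Umat_eq_T : Umat = ModularGroup.T := rfl

lemma coe_U_zpow (n : ℤ) : ((Umat ^ n : SL2) : Matrix (Fin 2) (Fin 2) ℤ) = !![1, n; 0, 1] := by
  rw [Umat_eq_T]; exact ModularGroup.coe_T_zpow n

lemma coe_L : ((Lmat : SL2) : Matrix (Fin 2) (Fin 2) ℤ) = !![1, 0; 1, 1] := rfl

lemma coe_L_inv : ((Lmat⁻¹ : SL2) : Matrix (Fin 2) (Fin 2) ℤ) = !![1, 0; -1, 1] := by
  simp [Matrix.SpecialLinearGroup.coe_inv, coe_L, Matrix.adjugate_fin_two]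

lemma coe_L_zpow (n : ℤ) : ((Lmat ^ n : SL2) : Matrix (Fin 2) (Fin 2) ℤ) = !![1, 0; n, 1] := by
  induction' n using Int.induction_on with n h n h
  · rw [zpow_zero, Matrix.SpecialLinearGroup.coe_one, Matrix.one_fin_two]
  · simp_rw [_root_.zpow_add, zpow_one, Matrix.SpecialLinearGroup.coe_mul, h, coe_L, Matrix.mul_fin_two]
    congrm !![_, _; ?_, _]
    ring
  · simp_rw [_root_.zpow_sub, zpow_one, Matrix.SpecialLinearGroup.coe_mul, h, coe_L_inv,
      Matrix.mul_fin_two]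
    congrm !![_, _; ?_, ?_] <;> ring

def Mw (p : Bool × ℤ) : SL2 := (if p.1 then Umat else Lmat) ^ (2 * p.2)

def wordVec : List (Bool × ℤ) → ℤ × ℤ → ℤ × ℤ
  | [], v => v
  | p :: rest, v =>
      let u := wordVec rest v
      if p.1 then (u.1 + 2 * p.2 * u.2, u.2) else (u.1, 2 * p.2 * u.1 + u.2)

lemma prod_mulVec (w : List (Bool × ℤ)) (v : ℤ × ℤ) :
    ((w.map Mw).prod : Matrix (Fin 2) (Fin 2) ℤ) *ᵥ ![v.1, v.2] =
      ![(wordVec w v).1, (wordVec w v).2] := by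
  induction w with
  | nil => simp [wordVec]
  | cons a rest ih =>
      rw [List.map_cons, List.prod_cons, Matrix.SpecialLinearGroup.coe_mul,
        ← Matrix.mulVec_mulVec, ih]
      cases ha : a.1 with
      | false =>
          rw [show Mw a = Lmat ^ (2 * a.2) by simp [Mw, ha], coe_L_zpow]
          funext i
          fin_cases i <;>
            simp [wordVec, ha, Matrix.mulVec, dotProduct, Fin.sum_univ_two]
      | true =>
          rw [show Mw a = Umat ^ (2 * a.2) by simp [Mw, ha], coe_U_zpow]
          funext i
          fin_cases i <;>
            simp [wordVec, ha, Matrix.mulVec, dotProduct, Fin.sum_univ_two]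


def startVec (w : List (Bool × ℤ)) : ℤ × ℤ :=
  if (w.getLast?.map Prod.fst).getD true then (0, 1) else (1, 0)

lemma key_abs {e x y : ℤ} (he : e ≠ 0) (h1 : |x| < |y|) (h2 : 2 ≤ |y|) :
    |y| < |x + 2 * e * y| ∧ 2 ≤ |x + 2 * e * y| := by
  have h3 : 1 ≤ |e| := Int.one_le_abs he
  have h4 : |2 * e * y| = 2 * |e| * |y| := by rw [abs_mul, abs_mul]; simp
  have h5 : |2 * e * y| ≤ |x + 2 * e * y| + |x| := by
    calc |2 * e * y| = |x + 2 * e * y + -x| := by congr 1; ring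
    _ ≤ |x + 2 * e * y| + |-x| := abs_add_le _ _
    _ = |x + 2 * e * y| + |x| := by rw [abs_neg]
  have h6 : 2 * |y| ≤ 2 * |e| * |y| := by nlinarith [abs_nonneg y]
  constructor <;> omega

lemma wordVec_cons (p : Bool × ℤ) (l : List (Bool × ℤ)) (v : ℤ × ℤ) :
    wordVec (p :: l) v =
      if p.1 then ((wordVec l v).1 + 2 * p.2 * (wordVec l v).2, (wordVec l v).2)
      else ((wordVec l v).1, 2 * p.2 * (wordVec l v).1 + (wordVec l v).2) := rfl

lemma main_lemma : ∀ (w : List (Bool × ℤ)) (a : Bool × ℤ),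
    (∀ p ∈ a :: w, p.2 ≠ 0) → List.Chain' (fun p q => p.1 ≠ q.1) (a :: w) →
    (if a.1 then
      |(wordVec (a :: w) (startVec (a :: w))).2| < |(wordVec (a :: w) (startVec (a :: w))).1| ∧
        2 ≤ |(wordVec (a :: w) (startVec (a :: w))).1|
    else
      |(wordVec (a :: w) (startVec (a :: w))).1| < |(wordVec (a :: w) (startVec (a :: w))).2| ∧
        2 ≤ |(wordVec (a :: w) (startVec (a :: w))).2|) := by
  intro w
  induction w with
  | nil =>
      intro a hz _
      have he : a.2 ≠ 0 := hz a (by simp)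
      have h3 : 1 ≤ |a.2| := Int.one_le_abs he
      have h4 : |2 * a.2| = 2 * |a.2| := by rw [abs_mul]; simp
      cases ha : a.1 with
      | true =>
          rw [if_pos rfl]
          have hsv : startVec [a] = (0, 1) := by simp [startVec, ha]
          have h0 : wordVec [a] (startVec [a]) = (2 * a.2, 1) := by
            rw [hsv, wordVec_cons, ha, if_pos rfl]
            show ((0 : ℤ) + 2 * a.2 * 1, (1 : ℤ)) = _
            norm_num
          rw [h0]
          show |(1 : ℤ)| < |2 * a.2| ∧ 2 ≤ |2 * a.2|
          rw [abs_one]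
          omega
      | false =>
          rw [if_neg (by simp)]
          have hsv : startVec [a] = (1, 0) := by simp [startVec, ha]
          have h0 : wordVec [a] (startVec [a]) = (1, 2 * a.2) := by
            rw [hsv, wordVec_cons, ha, if_neg (by simp)]
            show ((1 : ℤ), 2 * a.2 * 1 + 0) = _
            norm_num
          rw [h0]
          show |(1 : ℤ)| < |2 * a.2| ∧ 2 ≤ |2 * a.2|
          rw [abs_one]
          omega
  | cons b rest ih =>
      intro a hz halt
      have he : a.2 ≠ 0 := hz a (by simp)
      have hab : a.1 ≠ b.1 := (List.isChain_cons_cons.mp halt).1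
      have halt' : List.Chain' (fun p q => p.1 ≠ q.1) (b :: rest) :=
        (List.isChain_cons_cons.mp halt).2
      have hz' : ∀ p ∈ b :: rest, p.2 ≠ 0 := fun p hp => hz p (by simp [hp])
      have hsv : startVec (a :: b :: rest) = startVec (b :: rest) := by
        simp [startVec, List.getLast?_cons_cons]
      have IH := ih b hz' halt'
      set u := wordVec (b :: rest) (startVec (b :: rest)) with hu
      cases ha : a.1 with
      | true =>
          have hb : b.1 = false := by cases hbv : b.1 <;> simp_all
          rw [hb, if_neg (by simp)] at IH
          rw [if_pos rfl]
          have hv : wordVec (a :: b :: rest) (startVec (a :: b :: rest)) =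
              (u.1 + 2 * a.2 * u.2, u.2) := by
            rw [hsv, wordVec_cons, ha, if_pos rfl, ← hu]
          rw [hv]
          exact key_abs he IH.1 IH.2
      | false =>
          have hb : b.1 = true := by cases hbv : b.1 <;> simp_all
          rw [hb, if_pos rfl] at IH
          rw [if_neg (by simp)]
          have hv : wordVec (a :: b :: rest) (startVec (a :: b :: rest)) =
              (u.1, 2 * a.2 * u.1 + u.2) := by
            rw [hsv, wordVec_cons, ha, if_neg (by simp), ← hu]
          rw [hv]
          have h := key_abs (x := u.2) (y := u.1) he IH.1 IH.2
          rwa [show u.2 + 2 * a.2 * u.1 = 2 * a.2 * u.1 + u.2 from add_comm _ _] at h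

end PingPongAux



open PingPongAux in
/-- Any nonempty alternating word in nonzero powers of U² and L² is nontrivial in PSL₂(ℤ).
A letter `(b, e)` with `e ≠ 0` stands for `U^(2e)` if `b = true` and `L^(2e)` if `b = false`;
alternation means consecutive letters use different generators. -/
theorem stmt_15 (w : List (Bool × ℤ)) (hne : w ≠ [])
    (hz : ∀ p ∈ w, p.2 ≠ 0)
    (halt : List.Chain' (fun p q => p.1 ≠ q.1) w) :
    (w.map (fun p => (if p.1 then uP else lP) ^ (2 * p.2))).prod ≠ 1 := by
  obtain ⟨a, rest, rfl⟩ : ∃ a rest, w = a :: rest := by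
    cases w with
    | nil => exact absurd rfl hne
    | cons a rest => exact ⟨a, rest, rfl⟩
  intro hcontra
  have hfun : (fun p : Bool × ℤ => (if p.1 then uP else lP) ^ (2 * p.2)) =
      (QuotientGroup.mk' (Subgroup.center (Matrix.SpecialLinearGroup (Fin 2) ℤ))) ∘ Mw := by
    funext p
    cases hb : p.1 with
    | true =>
        show uP ^ (2 * p.2) = QuotientGroup.mk' _ (Mw p)
        rw [show Mw p = Umat ^ (2 * p.2) by simp [Mw, hb], map_zpow]
        rfl
    | false =>
        show lP ^ (2 * p.2) = QuotientGroup.mk' _ (Mw p)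
        rw [show Mw p = Lmat ^ (2 * p.2) by simp [Mw, hb], map_zpow]
        rfl
  rw [hfun] at hcontra
  have hcontra' : QuotientGroup.mk' (Subgroup.center (Matrix.SpecialLinearGroup (Fin 2) ℤ))
      ((List.map Mw (a :: rest)).prod) = 1 := by
    rw [map_list_prod, List.map_map]; exact hcontra
  have hmem : ((a :: rest).map Mw).prod ∈
      Subgroup.center (Matrix.SpecialLinearGroup (Fin 2) ℤ) :=
    (QuotientGroup.eq_one_iff _).mp hcontra'
  obtain ⟨r, hr2, hrs⟩ := Matrix.SpecialLinearGroup.mem_center_iff.mp hmem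
  have hr' : r = 1 ∨ r = -1 := by
    have : r * r = 1 := by simpa [pow_two] using hr2
    rcases Int.isUnit_iff.mp (IsUnit.of_mul_eq_one r this) with h | h
    · exact Or.inl h
    · exact Or.inr h
  have habs : |r| = 1 := by rcases hr' with h | h <;> simp [h]
  set v := startVec (a :: rest) with hv
  set u := wordVec (a :: rest) v with hu
  have hmv := prod_mulVec (a :: rest) v
  rw [← hrs] at hmv
  have h1 := congrFun hmv 0
  have h2 := congrFun hmv 1
  simp only [Matrix.mulVec, dotProduct, Fin.sum_univ_two, Matrix.scalar_apply,
    Matrix.diagonal, Matrix.of_apply, Matrix.cons_val', Matrix.cons_val_zero,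
    Matrix.cons_val_one, Matrix.head_cons, Matrix.head_fin_const, ← hu] at h1 h2
  have hvcases : v = (0, 1) ∨ v = (1, 0) := by
    rw [hv]; unfold startVec; split
    · exact Or.inl rfl
    · exact Or.inr rfl
  have hsmall : |u.1| ≤ 1 ∧ |u.2| ≤ 1 := by
    rcases hvcases with h | h <;> rw [h] at h1 h2 <;>
      norm_num at h1 h2 <;> rw [← h1, ← h2] <;> simp [habs]
  have hbig := main_lemma rest a hz halt
  rw [← hv, ← hu] at hbig
  cases ha : a.1 with
  | true => rw [ha, if_pos rfl] at hbig; omega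
  | false => rw [ha, if_neg (by simp)] at hbig; omega
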